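/- arXiv:2209.07308 — 5 statements merged into one kernel-verified Lean document; each statement's English description precedes it below -/
import Mathlib

section
/- Let ψ, φ be nonzero vectors in a finite-dimensional complex inner product space with ⟨φ, ψ⟩ ≠ 0, and let η be a Hermitian invertible operator. The transition matrix T = |ψ⟩⟨φ| / ⟨φ|ψ⟩ is η-pseudo-Hermitian if and only if T = |ψ⟩⟨ψ|η / ⟨ψ|η|ψ⟩ (in particular ⟨ψ|η|ψ⟩ ≠ 0 and η|ψ⟩ is a nonzero scalar multiple of |φ⟩). -/
open Matrix



lemma vmv_mulVec {n : ℕ} (v w x : Fin n → ℂ) : vecMulVec v w *ᵥ x = (w ⬝ᵥ x) • v := by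
  ext i
  simp [mulVec, dotProduct, vecMulVec_apply, Finset.sum_mul, Finset.mul_sum, mul_comm, mul_assoc, mul_left_comm]

lemma conjT_vmv {n : ℕ} (v w : Fin n → ℂ) : (vecMulVec v w)ᴴ = vecMulVec (star w) (star v) := by
  ext i j
  simp [vecMulVec_apply, mul_comm]

lemma mul_vmv {n : ℕ} (A : Matrix (Fin n) (Fin n) ℂ) (v w : Fin n → ℂ) :
    A * vecMulVec v w = vecMulVec (A *ᵥ v) w := by
  ext i j
  simp [vecMulVec_apply, mul_apply, mulVec, dotProduct, Finset.sum_mul, mul_assoc]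

lemma vmv_mul {n : ℕ} (A : Matrix (Fin n) (Fin n) ℂ) (v w : Fin n → ℂ) :
    vecMulVec v w * A = vecMulVec v (w ᵥ* A) := by
  ext i j
  simp [vecMulVec_apply, mul_apply, vecMul, dotProduct, Finset.mul_sum, mul_assoc, mul_left_comm]

/-- For nonzero `ψ, φ` with `⟨φ,ψ⟩ ≠ 0` and Hermitian invertible `η`, the transition
matrix `T = |ψ⟩⟨φ| / ⟨φ|ψ⟩` is η-pseudo-Hermitian iff `T = |ψ⟩⟨ψ|η / ⟨ψ|η|ψ⟩`
(in particular `⟨ψ|η|ψ⟩ ≠ 0` and `η|ψ⟩` is a nonzero multiple of `φ`). -/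
theorem transition_matrix_pseudo_hermitian_iff {n : ℕ}
    (η : Matrix (Fin n) (Fin n) ℂ) (hη : η.IsHermitian) (hinv : IsUnit η.det)
    (ψ φ : Fin n → ℂ) (hψ : ψ ≠ 0) (hφ : φ ≠ 0)
    (hov : star φ ⬝ᵥ ψ ≠ 0) :
    let T : Matrix (Fin n) (Fin n) ℂ := (star φ ⬝ᵥ ψ)⁻¹ • vecMulVec ψ (star φ)
    (Tᴴ = η * T * η⁻¹ ↔
      (star ψ ⬝ᵥ η.mulVec ψ ≠ 0 ∧
        T = (star ψ ⬝ᵥ η.mulVec ψ)⁻¹ • (vecMulVec ψ (star ψ) * η) ∧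
        ∃ c : ℂ, c ≠ 0 ∧ η.mulVec ψ = c • φ)) := by
  intro T
  set a := star φ ⬝ᵥ ψ with ha
  set b := star ψ ⬝ᵥ η *ᵥ ψ with hb
  have hbstar : star b = b := by
    rw [hb, ← star_dotProduct_star, star_star, star_mulVec, hη.eq]
    exact (dotProduct_mulVec _ _ _).symm
  have hηψ : η *ᵥ ψ ≠ 0 := by
    intro h
    apply hψ
    have := congrArg (fun v => η⁻¹ *ᵥ v) h
    simpa [mulVec_mulVec, Matrix.nonsing_inv_mul η hinv] using this
  constructor
  · intro h
    have h' : Tᴴ * η = η * T := by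
      rw [h, Matrix.mul_assoc, Matrix.mul_assoc, Matrix.nonsing_inv_mul η hinv, Matrix.mul_one]
    -- apply to ψ
    have hTψ : T *ᵥ ψ = ψ := by
      show ((a⁻¹ • vecMulVec ψ (star φ)) *ᵥ ψ) = ψ
      rw [smul_mulVec, vmv_mulVec, ← ha, smul_smul, inv_mul_cancel₀ hov, one_smul]
    have hkey : ((star a)⁻¹ * b) • φ = η *ᵥ ψ := by
      have := congrArg (fun M => M *ᵥ ψ) h'
      simp only [← mulVec_mulVec] at this
      have hT : Tᴴ = (star a)⁻¹ • vecMulVec φ (star ψ) := by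
        show ((a⁻¹ • vecMulVec ψ (star φ)))ᴴ = _
        rw [Matrix.conjTranspose_smul, conjT_vmv, star_star, star_inv₀]
      rw [hT, hTψ] at this
      rw [smul_mulVec, vmv_mulVec] at this
      rw [← hb] at this
      rw [smul_smul] at this
      exact this
    have hbne : b ≠ 0 := by
      intro h0
      apply hηψ
      rw [← hkey, h0]
      simp
    have hcne : (star a)⁻¹ * b ≠ 0 :=
      mul_ne_zero (inv_ne_zero (star_ne_zero.mpr hov)) hbne
    refine ⟨hbne, ?_, (star a)⁻¹ * b, hcne, ?_⟩
    · -- T = b⁻¹ • (vecMulVec ψ (star ψ) * η)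
      have hsv : star ψ ᵥ* η = star (η *ᵥ ψ) := by
        rw [star_mulVec, hη.eq]
      rw [vmv_mul, hsv, ← hkey]
      show a⁻¹ • vecMulVec ψ (star φ) = _
      ext i j
      simp only [Matrix.smul_apply, vecMulVec_apply, Pi.star_apply, Pi.smul_apply,
        smul_eq_mul, star_mul', star_inv₀, star_star, hbstar]
      field_simp
    · exact hkey.symm
  · rintro ⟨hbne, hT, c, hc, hcφ⟩
    have hT' : Tᴴ = b⁻¹ • (η * vecMulVec ψ (star ψ)) := by
      rw [hT, Matrix.conjTranspose_smul, Matrix.conjTranspose_mul, hη.eq, conjT_vmv, star_star,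
        star_inv₀, hbstar]
    rw [hT', hT]
    rw [Matrix.mul_smul, Matrix.smul_mul]
    congr 1
    rw [Matrix.mul_assoc, Matrix.mul_assoc, Matrix.mul_nonsing_inv η hinv, Matrix.mul_one]
end

section
/- Let H = H_A ⊗ H_B with η = η_A ⊗ η_B, η_A and η_B Hermitian invertible. Define X₁ = (X + η⁻¹X†η)/2 and X₂ = i(η⁻¹X†η − X)/2. Then tr_B(X) is η_A-pseudo-Hermitian and tr_A(X) is η_B-pseudo-Hermitian if and only if X = X₁ + i X₂ with X₁, X₂ both η-pseudo-Hermitian and tr_B(X₂) = 0 and tr_A(X₂) = 0. -/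
open Matrix Kronecker

/-- Partial trace over the second tensor factor. -/
noncomputable def trB {α β : Type*} [Fintype β]
    (X : Matrix (α × β) (α × β) ℂ) : Matrix α α ℂ :=
  Matrix.of fun a a' => ∑ b : β, X (a, b) (a', b)

/-- Partial trace over the first tensor factor. -/
noncomputable def trA {α β : Type*} [Fintype α]
    (X : Matrix (α × β) (α × β) ℂ) : Matrix β β ℂ :=
  Matrix.of fun b b' => ∑ a : α, X (a, b) (a, b')

section Aux

variable {m k : ℕ}

set_option maxHeartbeats 1000000 in
lemma trB_kron_conj (P R : Matrix (Fin m) (Fin m) ℂ)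
    (Q S : Matrix (Fin k) (Fin k) ℂ) (hQS : S * Q = 1)
    (M : Matrix (Fin m × Fin k) (Fin m × Fin k) ℂ) :
    trB ((P ⊗ₖ Q) * M * (R ⊗ₖ S)) = P * trB M * R := by
  ext a a'
  simp only [trB, of_apply, Matrix.mul_apply, kroneckerMap_apply, Fintype.sum_prod_type,
    Finset.sum_mul, Finset.mul_sum]
  rw [Finset.sum_comm]
  conv_lhs => enter [2, x1]; rw [Finset.sum_comm]
  conv_lhs => enter [2, x1, 2, x2]; rw [Finset.sum_comm]
  conv_lhs => enter [2, x1, 2, x2, 2, x3]; rw [Finset.sum_comm]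
  have inner : ∀ (x1 x3 : Fin m) (x2 x4 : Fin k),
      ∑ x : Fin k, P a x3 * Q x x4 * M (x3, x4) (x1, x2) * (R x1 a' * S x2 x)
        = (P a x3 * M (x3, x4) (x1, x2) * R x1 a') * (S * Q) x2 x4 := by
    intro x1 x3 x2 x4
    rw [Matrix.mul_apply, Finset.mul_sum]
    exact Finset.sum_congr rfl fun x _ => by ring
  simp_rw [inner, hQS, Matrix.one_apply, mul_ite, mul_one, mul_zero,
    Finset.sum_ite_eq Finset.univ, Finset.mem_univ, if_true]
  conv_lhs => enter [2, x1]; rw [Finset.sum_comm]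

set_option maxHeartbeats 1000000 in
lemma trA_kron_conj (P R : Matrix (Fin m) (Fin m) ℂ)
    (Q S : Matrix (Fin k) (Fin k) ℂ) (hRP : R * P = 1)
    (M : Matrix (Fin m × Fin k) (Fin m × Fin k) ℂ) :
    trA ((P ⊗ₖ Q) * M * (R ⊗ₖ S)) = Q * trA M * S := by
  ext b b'
  simp only [trA, of_apply, Matrix.mul_apply, kroneckerMap_apply, Fintype.sum_prod_type,
    Finset.sum_mul, Finset.mul_sum]
  rw [Finset.sum_comm]
  conv_lhs => enter [2, x1]; rw [Finset.sum_comm]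
  conv_lhs => enter [2, x1, 2, x2]; rw [Finset.sum_comm]
  conv_lhs => enter [2, x1, 2, x2, 2, x3]; rw [Finset.sum_comm]
  have inner : ∀ (x1 x3 : Fin m) (x2 x4 : Fin k),
      ∑ x : Fin m, P x x3 * Q b x4 * M (x3, x4) (x1, x2) * (R x1 x * S x2 b')
        = (Q b x4 * M (x3, x4) (x1, x2) * S x2 b') * (R * P) x1 x3 := by
    intro x1 x3 x2 x4
    rw [Matrix.mul_apply, Finset.mul_sum]
    exact Finset.sum_congr rfl fun x _ => by ring
  simp_rw [inner, hRP, Matrix.one_apply, mul_ite, mul_one, mul_zero]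
  conv_lhs => enter [2, x, 2, x1]; rw [Finset.sum_comm]
  simp_rw [Finset.sum_ite_eq Finset.univ, Finset.mem_univ, if_true]
  rw [Finset.sum_comm]
  conv_lhs => enter [2, x1]; rw [Finset.sum_comm]

lemma trB_conjTranspose (M : Matrix (Fin m × Fin k) (Fin m × Fin k) ℂ) :
    trB Mᴴ = (trB M)ᴴ := by
  ext a a'
  simp [trB, conjTranspose_apply, map_sum]

lemma trA_conjTranspose (M : Matrix (Fin m × Fin k) (Fin m × Fin k) ℂ) :
    trA Mᴴ = (trA M)ᴴ := by
  ext b b'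
  simp [trA, conjTranspose_apply, map_sum]

lemma trB_smul (c : ℂ) (M : Matrix (Fin m × Fin k) (Fin m × Fin k) ℂ) :
    trB (c • M) = c • trB M := by
  ext a a'
  simp [trB, Finset.mul_sum]

lemma trA_smul (c : ℂ) (M : Matrix (Fin m × Fin k) (Fin m × Fin k) ℂ) :
    trA (c • M) = c • trA M := by
  ext b b'
  simp [trA, Finset.mul_sum]

lemma trB_sub (M N : Matrix (Fin m × Fin k) (Fin m × Fin k) ℂ) :
    trB (M - N) = trB M - trB N := by
  ext a a'
  simp [trB, Finset.sum_sub_distrib]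

lemma trA_sub (M N : Matrix (Fin m × Fin k) (Fin m × Fin k) ℂ) :
    trA (M - N) = trA M - trA N := by
  ext b b'
  simp [trA, Finset.sum_sub_distrib]

end Aux

/-- `tr_B X` and `tr_A X` are `η_A`- resp. `η_B`-pseudo-Hermitian iff
`X = X₁ + i X₂` with `X₁, X₂` both `(η_A ⊗ η_B)`-pseudo-Hermitian and
`tr_B X₂ = 0`, `tr_A X₂ = 0`, where `X₁ = (X + η⁻¹X†η)/2`,
`X₂ = i(η⁻¹X†η − X)/2`. -/
theorem partialTrace_pseudo_hermitian_iff {m k : ℕ}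
    (ηA : Matrix (Fin m) (Fin m) ℂ) (ηB : Matrix (Fin k) (Fin k) ℂ)
    (hηA : ηA.IsHermitian) (hηB : ηB.IsHermitian)
    (hA : IsUnit ηA.det) (hB : IsUnit ηB.det)
    (X : Matrix (Fin m × Fin k) (Fin m × Fin k) ℂ) :
    let η := ηA ⊗ₖ ηB
    let X₁ := (2 : ℂ)⁻¹ • (X + η⁻¹ * Xᴴ * η)
    let X₂ := (2 : ℂ)⁻¹ • (Complex.I • (η⁻¹ * Xᴴ * η - X))
    (((trB X)ᴴ = ηA * trB X * ηA⁻¹ ∧ (trA X)ᴴ = ηB * trA X * ηB⁻¹) ↔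
      (X = X₁ + Complex.I • X₂ ∧
        X₁ᴴ = η * X₁ * η⁻¹ ∧ X₂ᴴ = η * X₂ * η⁻¹ ∧
        trB X₂ = 0 ∧ trA X₂ = 0)) := by
  intro η X₁ X₂
  have hηdet : IsUnit η.det := by
    rw [det_kronecker]
    exact (hA.pow _).mul (hB.pow _)
  have hinv : η⁻¹ = ηA⁻¹ ⊗ₖ ηB⁻¹ := inv_kronecker ηA ηB
  have hηH : ηᴴ = η := by
    show (ηA ⊗ₖ ηB)ᴴ = ηA ⊗ₖ ηB
    conv_rhs => rw [← hηA.eq, ← hηB.eq]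
    ext ⟨a, b⟩ ⟨a', b'⟩
    simp [conjTranspose_apply, kroneckerMap_apply, star_mul']
  have hηinvH : (η⁻¹)ᴴ = η⁻¹ := by rw [conjTranspose_nonsing_inv, hηH]
  have hmul : η * η⁻¹ = 1 := mul_nonsing_inv η hηdet
  have hAmul : ηA * ηA⁻¹ = 1 := mul_nonsing_inv ηA hA
  have hAmul' : ηA⁻¹ * ηA = 1 := nonsing_inv_mul ηA hA
  have hBmul : ηB * ηB⁻¹ = 1 := mul_nonsing_inv ηB hB
  have hBmul' : ηB⁻¹ * ηB = 1 := nonsing_inv_mul ηB hB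
  have h2 : star ((2 : ℂ)⁻¹) = (2 : ℂ)⁻¹ := by simp
  have hI : star Complex.I = -Complex.I := Complex.conj_I
  have e1 : (η⁻¹ * Xᴴ * η)ᴴ = η * X * η⁻¹ := by
    rw [conjTranspose_mul, conjTranspose_mul, conjTranspose_conjTranspose, hηH, hηinvH,
      mul_assoc]
  have e2 : η * (η⁻¹ * Xᴴ * η) * η⁻¹ = Xᴴ := by
    calc η * (η⁻¹ * Xᴴ * η) * η⁻¹ = (η * η⁻¹) * Xᴴ * (η * η⁻¹) := by noncomm_ring
      _ = Xᴴ := by rw [hmul, one_mul, mul_one]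
  -- The decomposition and the pseudo-Hermiticity of X₁, X₂ are unconditional.
  have hdecomp : X = X₁ + Complex.I • X₂ := by
    show X = (2 : ℂ)⁻¹ • (X + η⁻¹ * Xᴴ * η)
      + Complex.I • ((2 : ℂ)⁻¹ • (Complex.I • (η⁻¹ * Xᴴ * η - X)))
    ext i j
    simp only [Matrix.add_apply, Matrix.smul_apply, Matrix.sub_apply, smul_eq_mul]
    linear_combination ((2 : ℂ)⁻¹ * (X i j - (η⁻¹ * Xᴴ * η) i j)) * Complex.I_mul_I
  have hX1 : X₁ᴴ = η * X₁ * η⁻¹ := by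
    show ((2 : ℂ)⁻¹ • (X + η⁻¹ * Xᴴ * η))ᴴ
      = η * ((2 : ℂ)⁻¹ • (X + η⁻¹ * Xᴴ * η)) * η⁻¹
    rw [conjTranspose_smul, conjTranspose_add, e1, h2, mul_smul_comm, smul_mul_assoc,
      mul_add, add_mul, e2, mul_assoc, add_comm]
  have hX2 : X₂ᴴ = η * X₂ * η⁻¹ := by
    show ((2 : ℂ)⁻¹ • (Complex.I • (η⁻¹ * Xᴴ * η - X)))ᴴ
      = η * ((2 : ℂ)⁻¹ • (Complex.I • (η⁻¹ * Xᴴ * η - X))) * η⁻¹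
    rw [conjTranspose_smul, conjTranspose_smul, conjTranspose_sub, e1, h2, hI,
      neg_smul, ← smul_neg, neg_sub, mul_smul_comm, mul_smul_comm, smul_mul_assoc,
      smul_mul_assoc, mul_sub, sub_mul, e2, mul_assoc]
  -- partial traces of the conjugated matrix
  have htrB : trB (η⁻¹ * Xᴴ * η) = ηA⁻¹ * (trB X)ᴴ * ηA := by
    rw [hinv]
    show trB ((ηA⁻¹ ⊗ₖ ηB⁻¹) * Xᴴ * (ηA ⊗ₖ ηB)) = _
    rw [trB_kron_conj _ _ _ _ hBmul, trB_conjTranspose]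
  have htrA : trA (η⁻¹ * Xᴴ * η) = ηB⁻¹ * (trA X)ᴴ * ηB := by
    rw [hinv]
    show trA ((ηA⁻¹ ⊗ₖ ηB⁻¹) * Xᴴ * (ηA ⊗ₖ ηB)) = _
    rw [trA_kron_conj _ _ _ _ hAmul, trA_conjTranspose]
  have hc : ((2 : ℂ)⁻¹ * Complex.I) ≠ 0 := by
    simp [Complex.I_ne_zero]
  have htrB2 : trB X₂ = ((2 : ℂ)⁻¹ * Complex.I) • (ηA⁻¹ * (trB X)ᴴ * ηA - trB X) := by
    show trB ((2 : ℂ)⁻¹ • (Complex.I • (η⁻¹ * Xᴴ * η - X))) = _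
    rw [trB_smul, trB_smul, trB_sub, htrB, smul_smul]
  have htrA2 : trA X₂ = ((2 : ℂ)⁻¹ * Complex.I) • (ηB⁻¹ * (trA X)ᴴ * ηB - trA X) := by
    show trA ((2 : ℂ)⁻¹ • (Complex.I • (η⁻¹ * Xᴴ * η - X))) = _
    rw [trA_smul, trA_smul, trA_sub, htrA, smul_smul]
  have hiffB : (trB X)ᴴ = ηA * trB X * ηA⁻¹ ↔ trB X₂ = 0 := by
    rw [htrB2, smul_eq_zero, or_iff_right hc, sub_eq_zero]
    constructor
    · intro h
      calc ηA⁻¹ * (trB X)ᴴ * ηA = ηA⁻¹ * (ηA * trB X * ηA⁻¹) * ηA := by rw [h]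
        _ = (ηA⁻¹ * ηA) * trB X * (ηA⁻¹ * ηA) := by noncomm_ring
        _ = trB X := by rw [hAmul', one_mul, mul_one]
    · intro h
      calc (trB X)ᴴ = (ηA * ηA⁻¹) * (trB X)ᴴ * (ηA * ηA⁻¹) := by
            rw [hAmul, one_mul, mul_one]
        _ = ηA * (ηA⁻¹ * (trB X)ᴴ * ηA) * ηA⁻¹ := by noncomm_ring
        _ = ηA * trB X * ηA⁻¹ := by rw [h]
  have hiffA : (trA X)ᴴ = ηB * trA X * ηB⁻¹ ↔ trA X₂ = 0 := by
    rw [htrA2, smul_eq_zero, or_iff_right hc, sub_eq_zero]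
    constructor
    · intro h
      calc ηB⁻¹ * (trA X)ᴴ * ηB = ηB⁻¹ * (ηB * trA X * ηB⁻¹) * ηB := by rw [h]
        _ = (ηB⁻¹ * ηB) * trA X * (ηB⁻¹ * ηB) := by noncomm_ring
        _ = trA X := by rw [hBmul', one_mul, mul_one]
    · intro h
      calc (trA X)ᴴ = (ηB * ηB⁻¹) * (trA X)ᴴ * (ηB * ηB⁻¹) := by
            rw [hBmul, one_mul, mul_one]
        _ = ηB * (ηB⁻¹ * (trA X)ᴴ * ηB) * ηB⁻¹ := by noncomm_ring
        _ = ηB * trA X * ηB⁻¹ := by rw [h]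
  constructor
  · rintro ⟨h1, h2'⟩
    exact ⟨hdecomp, hX1, hX2, hiffB.mp h1, hiffA.mp h2'⟩
  · rintro ⟨-, -, -, h4, h5⟩
    exact ⟨hiffB.mpr h4, hiffA.mpr h5⟩
end

section
/- Let M be a diagonalizable complex matrix whose nonreal eigenvalues come in complex-conjugate pairs with equal multiplicities. Then there exists a Hermitian invertible matrix η such that M† = η M η⁻¹, i.e., M is pseudo-Hermitian. -/
open Matrix

/-- Mostafazadeh: a diagonalizable matrix whose spectrum (with multiplicity) is
invariant under complex conjugation is η-pseudo-Hermitian for some Hermitian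
invertible η. -/
theorem pseudo_hermitian_of_conj_invariant_spectrum {d : ℕ}
    (M : Matrix (Fin d) (Fin d) ℂ)
    (hdiag : ∃ (P : Matrix (Fin d) (Fin d) ℂ) (lam : Fin d → ℂ)
        (σ : Equiv.Perm (Fin d)),
      IsUnit P.det ∧ M = P * diagonal lam * P⁻¹ ∧
      ∀ i, lam (σ i) = starRingEnd ℂ (lam i)) :
    ∃ η : Matrix (Fin d) (Fin d) ℂ,
      η.IsHermitian ∧ IsUnit η.det ∧ Mᴴ = η * M * η⁻¹ := by
  obtain ⟨P, lam, σ, hP, hM, hσ⟩ := hdiag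
  -- the inverse permutation also conjugates eigenvalues
  have hσ' : ∀ i, lam (σ⁻¹ i) = starRingEnd ℂ (lam i) := by
    intro i
    have h := hσ (σ⁻¹ i)
    simp only [show σ (σ⁻¹ i) = i from σ.apply_symm_apply i] at h
    rw [h, Complex.conj_conj]
  -- build an involution τ with lam ∘ τ = conj ∘ lam
  set f : Fin d → Fin d := fun i =>
    if (lam i).im = 0 then i else if 0 < (lam i).im then σ i else σ⁻¹ i with hf
  have hlamf : ∀ i, lam (f i) = starRingEnd ℂ (lam i) := by
    intro i
    by_cases h0 : (lam i).im = 0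
    · simp [hf, h0, (Complex.conj_eq_iff_im).mpr h0]
    · by_cases hpos : 0 < (lam i).im
      · simp [hf, h0, hpos, hσ i]
      · simpa [hf, h0, hpos] using hσ' i
  have hinv : Function.Involutive f := by
    intro i
    by_cases h0 : (lam i).im = 0
    · simp [hf, h0]
    · by_cases hpos : 0 < (lam i).im
      · have h1 : (lam (σ i)).im = -(lam i).im := by rw [hσ i]; simp
        simp only [hf, h0, hpos, if_true, if_false]
        rw [if_neg (by rw [h1]; linarith), if_neg (by rw [h1]; linarith)]
        simp
      · have hneg : (lam i).im < 0 := lt_of_le_of_ne (not_lt.mp hpos) h0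
        have h1 : (lam (σ⁻¹ i)).im = -(lam i).im := by rw [hσ' i]; simp
        simp only [hf, h0, hpos, if_false]
        rw [if_neg (by rw [h1]; linarith), if_pos (by rw [h1]; linarith)]
        simp
  -- the symmetric permutation matrix of the involution
  set S : Matrix (Fin d) (Fin d) ℂ :=
    Matrix.of (fun i j => if f i = j then 1 else 0) with hS
  have hfiff : ∀ i j, f j = i ↔ f i = j := by
    intro i j
    constructor
    · intro h; rw [← h, hinv]
    · intro h; rw [← h, hinv]
  have hSH : Sᴴ = S := by
    ext i j
    simp only [hS, conjTranspose_apply, of_apply]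
    by_cases h : f i = j
    · rw [if_pos ((hfiff i j).mpr h), if_pos h, star_one]
    · rw [if_neg (fun hc => h ((hfiff i j).mp hc)), if_neg h, star_zero]
  have hSS : S * S = 1 := by
    ext i j
    simp only [hS, mul_apply, of_apply, one_apply]
    rw [Finset.sum_eq_single (f i)]
    · rw [if_pos rfl, one_mul, hinv i]
    · intro k _ hk
      rw [if_neg (fun h => hk h.symm), zero_mul]
    · intro h; exact absurd (Finset.mem_univ _) h
  have hcomm : diagonal (fun i => starRingEnd ℂ (lam i)) * S = S * diagonal lam := by
    ext i j
    rw [diagonal_mul, mul_diagonal]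
    simp only [hS, of_apply]
    by_cases h : f i = j
    · rw [if_pos h, mul_one, one_mul, ← h, hlamf i]
    · rw [if_neg h, mul_zero, zero_mul]
  have key : S * diagonal lam * S = diagonal (fun i => starRingEnd ℂ (lam i)) := by
    rw [← hcomm, Matrix.mul_assoc, hSS, Matrix.mul_one]
  have hPH : IsUnit (Pᴴ).det := by
    rw [det_conjTranspose]; exact hP.star
  set η : Matrix (Fin d) (Fin d) ℂ := (Pᴴ)⁻¹ * S * P⁻¹ with hη
  have hηinv : η⁻¹ = P * S * Pᴴ := by
    apply Matrix.inv_eq_right_inv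
    rw [hη]
    calc (Pᴴ)⁻¹ * S * P⁻¹ * (P * S * Pᴴ)
        = (Pᴴ)⁻¹ * (S * ((P⁻¹ * P) * S)) * Pᴴ := by
          simp only [Matrix.mul_assoc]
      _ = 1 := by
          rw [Matrix.nonsing_inv_mul P hP, Matrix.one_mul, hSS, Matrix.mul_one,
            Matrix.nonsing_inv_mul _ hPH]
  refine ⟨η, ?_, ?_, ?_⟩
  · show ηᴴ = η
    rw [hη, conjTranspose_mul, conjTranspose_mul, hSH,
      conjTranspose_nonsing_inv, conjTranspose_nonsing_inv, conjTranspose_conjTranspose,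
      Matrix.mul_assoc]
  · have hSdet : IsUnit S.det := by
      apply IsUnit.of_mul_eq_one S.det
      rw [← det_mul, hSS, det_one]
    rw [hη, det_mul, det_mul]
    exact ((Matrix.isUnit_nonsing_inv_det _ hPH).mul hSdet).mul
      (Matrix.isUnit_nonsing_inv_det _ hP)
  · rw [hM, hηinv, hη]
    have hstar : star lam = fun i => starRingEnd ℂ (lam i) := rfl
    calc (P * diagonal lam * P⁻¹)ᴴ
        = (Pᴴ)⁻¹ * (diagonal (fun i => starRingEnd ℂ (lam i)) * Pᴴ) := by
          rw [conjTranspose_mul, conjTranspose_mul, conjTranspose_nonsing_inv,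
            diagonal_conjTranspose, hstar]
      _ = (Pᴴ)⁻¹ * (S * (diagonal lam * (S * Pᴴ))) := by
          rw [← key]; simp only [Matrix.mul_assoc]
      _ = (Pᴴ)⁻¹ * (S * ((P⁻¹ * P) * (diagonal lam * ((P⁻¹ * P) * (S * Pᴴ))))) := by
          rw [Matrix.nonsing_inv_mul P hP, Matrix.one_mul, Matrix.one_mul]
      _ = (Pᴴ)⁻¹ * S * P⁻¹ * (P * diagonal lam * P⁻¹) * (P * S * Pᴴ) := by
          simp only [Matrix.mul_assoc]
end

section
/- Let η_A and η_B be positive definite Hermitian operators on finite-dimensional Hilbert spaces H_A, H_B, set η = η_A ⊗ η_B, and let ψ satisfy ⟨ψ, ηψ⟩ ≠ 0. Then all eigenvalues of T_A := tr_B(|ψ⟩⟨ψ|η) / ⟨ψ|η|ψ⟩ are nonnegative real numbers. -/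
open Matrix Kronecker ComplexOrder
open scoped MatrixOrder

lemma aux_nonneg_real {z : ℂ} (hz : 0 ≤ z) : ∃ r : ℝ, 0 ≤ r ∧ z = (r : ℂ) := by
  rw [Complex.le_def] at hz
  exact ⟨z.re, by simpa using hz.1, by
    rw [Complex.ext_iff]; simp [← hz.2]⟩

lemma aux_psd_spectrum {n : ℕ} {P : Matrix (Fin n) (Fin n) ℂ} (hP : P.PosSemidef)
    {μ : ℂ} (hμ : μ ∈ spectrum ℂ P) : ∃ r : ℝ, 0 ≤ r ∧ μ = (r : ℂ) := by
  rw [spectrum.mem_iff, Algebra.algebraMap_eq_smul_one] at hμ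
  have hdet : (μ • (1 : Matrix (Fin n) (Fin n) ℂ) - P).det = 0 := by
    by_contra h
    exact hμ ((Matrix.isUnit_iff_isUnit_det _).mpr (isUnit_iff_ne_zero.mpr h))
  obtain ⟨v, hv0, hv⟩ := (Matrix.exists_mulVec_eq_zero_iff).mpr hdet
  have hPv : P *ᵥ v = μ • v := by
    have := hv
    rw [sub_mulVec, smul_mulVec, one_mulVec, sub_eq_zero] at this
    exact this.symm
  have h1 : 0 ≤ star v ⬝ᵥ P *ᵥ v := hP.dotProduct_mulVec_nonneg v
  obtain ⟨a, ha, haeq⟩ := aux_nonneg_real h1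
  have h2 : 0 < star v ⬝ᵥ v := by
    simpa using Matrix.dotProduct_star_self_pos_iff.mpr hv0
  obtain ⟨d, hd, hdeq⟩ := aux_nonneg_real h2.le
  have hdpos : (0:ℝ) < d := by
    rcases lt_or_eq_of_le hd with h | h
    · exact h
    · exfalso; rw [← h] at hdeq; simp at hdeq; exact h2.ne' (by simp [hdeq])
  have key : (a : ℂ) = μ * d := by
    rw [← haeq, hPv, dotProduct_smul, hdeq]; rfl
  refine ⟨a / d, by positivity, ?_⟩
  push_cast
  rw [key]
  field_simp

lemma aux_kron_conjTranspose {m k : ℕ} (A : Matrix (Fin m) (Fin m) ℂ)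
    (B : Matrix (Fin k) (Fin k) ℂ) : (A ⊗ₖ B)ᴴ = Aᴴ ⊗ₖ Bᴴ := by
  ext ⟨a, b⟩ ⟨a', b'⟩
  simp [conjTranspose_apply, kroneckerMap_apply]

lemma aux_kron_psd {m k : ℕ} {A : Matrix (Fin m) (Fin m) ℂ} {B : Matrix (Fin k) (Fin k) ℂ}
    (hA : A.PosSemidef) (hB : B.PosSemidef) : (A ⊗ₖ B).PosSemidef := by
  have h : A ⊗ₖ B = (CFC.sqrt A ⊗ₖ CFC.sqrt B)ᴴ * (CFC.sqrt A ⊗ₖ CFC.sqrt B) := by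
    rw [aux_kron_conjTranspose, (CFC.sqrt_nonneg A).posSemidef.1.eq, (CFC.sqrt_nonneg B).posSemidef.1.eq,
      ← mul_kronecker_mul, CFC.sqrt_mul_sqrt_self A hA.nonneg, CFC.sqrt_mul_sqrt_self B hB.nonneg]
  rw [h]
  exact posSemidef_conjTranspose_mul_self _

set_option maxHeartbeats 1000000 in
lemma aux_trB_eq {m k : ℕ}
    (ηA : Matrix (Fin m) (Fin m) ℂ) (ηB : Matrix (Fin k) (Fin k) ℂ)
    (ψ : Fin m × Fin k → ℂ) :
    (Matrix.of fun a a' => ∑ b : Fin k,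
      (vecMulVec ψ (star ψ) * (ηA ⊗ₖ ηB)) (a, b) (a', b)) =
    ((Matrix.of fun a b => ψ (a, b)) * ηBᵀ * (Matrix.of fun a b => ψ (a, b))ᴴ) * ηA := by
  ext a a'
  simp only [Matrix.of_apply, Matrix.mul_apply, vecMulVec_apply, kroneckerMap_apply,
    Fintype.sum_prod_type, conjTranspose_apply, transpose_apply, Pi.star_apply,
    Finset.sum_mul, Finset.mul_sum]
  rw [Finset.sum_comm]
  congr 1; ext a''
  rw [Finset.sum_comm]
  congr 1; ext b''
  congr 1; ext b
  ring

open Pointwise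

/-- For positive definite `η_A, η_B` and `⟨ψ|η|ψ⟩ ≠ 0` with `η = η_A ⊗ η_B`,
all eigenvalues of `T_A = tr_B(|ψ⟩⟨ψ|η)/⟨ψ|η|ψ⟩` are nonnegative reals. -/
theorem eigenvalues_nonneg_of_posDef_factors {m k : ℕ}
    (ηA : Matrix (Fin m) (Fin m) ℂ) (ηB : Matrix (Fin k) (Fin k) ℂ)
    (hηA : ηA.PosDef) (hηB : ηB.PosDef)
    (ψ : Fin m × Fin k → ℂ)
    (hψ : star ψ ⬝ᵥ (ηA ⊗ₖ ηB).mulVec ψ ≠ 0) :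
    let TA : Matrix (Fin m) (Fin m) ℂ :=
      (star ψ ⬝ᵥ (ηA ⊗ₖ ηB).mulVec ψ)⁻¹ •
        trB (vecMulVec ψ (star ψ) * (ηA ⊗ₖ ηB))
    ∀ μ ∈ spectrum ℂ TA, ∃ r : ℝ, 0 ≤ r ∧ μ = (r : ℂ) := by
  intro TA μ hμ
  set c : ℂ := star ψ ⬝ᵥ (ηA ⊗ₖ ηB).mulVec ψ with hc
  -- c is a nonnegative (indeed positive) real
  have hηPSD : (ηA ⊗ₖ ηB).PosSemidef := aux_kron_psd hηA.posSemidef hηB.posSemidef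
  obtain ⟨r, hr0, hrc⟩ := aux_nonneg_real (hηPSD.dotProduct_mulVec_nonneg ψ)
  have hrc' : c = (r : ℂ) := hrc
  have hrne : r ≠ 0 := by
    intro h
    exact hψ (by rw [hrc', h]; simp)
  have hrpos : 0 < r := lt_of_le_of_ne hr0 (Ne.symm hrne)
  -- the auxiliary matrices
  set Ψ : Matrix (Fin m) (Fin k) ℂ := Matrix.of fun a b => ψ (a, b) with hΨ
  set N : Matrix (Fin m) (Fin m) ℂ := Ψ * ηBᵀ * Ψᴴ with hNdef
  have hM : trB (vecMulVec ψ (star ψ) * (ηA ⊗ₖ ηB)) = N * ηA := aux_trB_eq ηA ηB ψ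
  have hN : N.PosSemidef := (hηB.transpose.posSemidef).mul_mul_conjTranspose_same Ψ
  -- square root of ηA
  set S : Matrix (Fin m) (Fin m) ℂ := CFC.sqrt ηA with hSdef
  have hSh : Sᴴ = S := (CFC.sqrt_nonneg ηA).posSemidef.1
  have hSS : S * S = ηA := CFC.sqrt_mul_sqrt_self ηA hηA.posSemidef.nonneg
  have hSunit : IsUnit S := by
    rw [Matrix.isUnit_iff_isUnit_det, isUnit_iff_ne_zero]
    intro h
    have hdet : ηA.det = 0 := by rw [← hSS, det_mul, h, mul_zero]
    exact hηA.det_pos.ne' hdet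
  set u : (Matrix (Fin m) (Fin m) ℂ)ˣ := hSunit.unit with hudef
  have hu : (u : Matrix (Fin m) (Fin m) ℂ) = S := hSunit.unit_spec
  have hconj : spectrum ℂ (N * ηA) = spectrum ℂ (S * N * S) := by
    have h := spectrum.units_conjugate (R := ℂ) (a := N * ηA) (u := u)
    rw [← h]
    have h1 : S * (↑(u⁻¹) : Matrix (Fin m) (Fin m) ℂ) = 1 := by
      rw [← hu]; exact u.mul_inv
    rw [hu, ← hSS]
    simp only [mul_assoc, h1, mul_one]
  have hSNS : (S * N * S).PosSemidef := by
    have h := hN.mul_mul_conjTranspose_same S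
    rwa [hSh] at h
  -- unfold TA and use scalar-unit spectrum lemma
  have hμ' : μ ∈ spectrum ℂ (c⁻¹ • (N * ηA)) := by
    have h0 : μ ∈ spectrum ℂ (c⁻¹ • trB (vecMulVec ψ (star ψ) * (ηA ⊗ₖ ηB))) := hμ
    rwa [hM] at h0
  set cu : ℂˣ := Units.mk0 c⁻¹ (inv_ne_zero hψ) with hcu
  have hμ'' : μ ∈ cu • spectrum ℂ (N * ηA) := by
    rw [← spectrum.unit_smul_eq_smul]
    exact hμ'
  obtain ⟨ν, hν, hνμ⟩ := hμ''
  rw [hconj] at hν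
  obtain ⟨s, hs, hsν⟩ := aux_psd_spectrum hSNS hν
  refine ⟨s / r, by positivity, ?_⟩
  have : μ = c⁻¹ * ν := by
    rw [← hνμ]; rfl
  rw [this, hsν, hrc']
  push_cast
  field_simp
end

section
/- Let U be a unitary operator and Φ a nonzero vector. If there exists a Hermitian invertible operator η such that η' := Uη satisfies η'|Φ⟩ = |Φ⟩ and (η')² = 1, then the operator T := |Φ⟩⟨Φ|U is η-pseudo-Hermitian, i.e., η T η⁻¹ = T†. -/
open Matrix

lemma mul_vecMulVec' {d : ℕ} (A : Matrix (Fin d) (Fin d) ℂ) (w v : Fin d → ℂ) :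
    A * vecMulVec w v = vecMulVec (A.mulVec w) v := by
  ext i j
  simp [vecMulVec, mul_apply, mulVec, dotProduct, Finset.sum_mul, mul_assoc]

lemma vecMulVec_mul' {d : ℕ} (A : Matrix (Fin d) (Fin d) ℂ) (w v : Fin d → ℂ) :
    vecMulVec w v * A = vecMulVec w (vecMul v A) := by
  ext i j
  simp [vecMulVec, mul_apply, vecMul, dotProduct, Finset.mul_sum, mul_assoc]

/-- If `U` is unitary, `Φ ≠ 0`, and there is a Hermitian invertible `η` such that
`η' := Uη` satisfies `η'|Φ⟩ = |Φ⟩` and `(η')² = 1`, then `T := |Φ⟩⟨Φ|U` is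
η-pseudo-Hermitian: `η T η⁻¹ = T†`. -/
theorem rankOne_mul_unitary_pseudo_hermitian {d : ℕ}
    (U η : Matrix (Fin d) (Fin d) ℂ) (hU : Uᴴ * U = 1)
    (hη : η.IsHermitian) (hinv : IsUnit η.det)
    (Φ : Fin d → ℂ) (hΦ : Φ ≠ 0)
    (hfix : (U * η).mulVec Φ = Φ) (hsq : (U * η) * (U * η) = 1) :
    let T : Matrix (Fin d) (Fin d) ℂ := vecMulVec Φ (star Φ) * U
    η * T * η⁻¹ = Tᴴ := by
  intro T
  set P : Matrix (Fin d) (Fin d) ℂ := vecMulVec Φ (star Φ) with hP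
  -- η Φ = Uᴴ Φ
  have hηΦ : η.mulVec Φ = Uᴴ.mulVec Φ := by
    have h := congrArg (fun v => Uᴴ.mulVec v) hfix
    simpa [Matrix.mulVec_mulVec, ← Matrix.mul_assoc, hU] using h
  -- star Φ * (η Uᴴ) = star Φ
  have hstar : vecMul (star Φ) (η * Uᴴ) = star Φ := by
    have := congrArg star hfix
    rwa [star_mulVec, conjTranspose_mul, hη.eq] at this
  have hηinv : η * η⁻¹ = 1 := Matrix.mul_nonsing_inv η hinv
  -- star Φ * (U η⁻¹) = star Φ
  have hstar2 : vecMul (star Φ) (U * η⁻¹) = star Φ := by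
    calc vecMul (star Φ) (U * η⁻¹)
        = vecMul (vecMul (star Φ) (η * Uᴴ)) (U * η⁻¹) := by rw [hstar]
      _ = vecMul (star Φ) ((η * Uᴴ) * (U * η⁻¹)) := by rw [vecMul_vecMul]
      _ = star Φ := by
          rw [Matrix.mul_assoc, ← Matrix.mul_assoc Uᴴ, hU, Matrix.one_mul, hηinv,
            vecMul_one]
  have hA : η * P = Uᴴ * P := by
    rw [hP, mul_vecMulVec', mul_vecMulVec', hηΦ]
  have hB : P * (U * η⁻¹) = P := by
    rw [hP, vecMulVec_mul', hstar2]
  have hC : Pᴴ = P := by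
    ext i j
    simp [hP, vecMulVec, mul_comm]
  calc η * T * η⁻¹ = (η * P) * (U * η⁻¹) := by
        simp only [T, Matrix.mul_assoc]; rfl
    _ = Uᴴ * (P * (U * η⁻¹)) := by rw [hA, Matrix.mul_assoc]
    _ = Uᴴ * P := by rw [hB]
    _ = Tᴴ := by rw [show T = P * U from rfl, conjTranspose_mul, hC]
end
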